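/- For integers a ≥ b ≥ 0 and a real number q ≥ 4, the Gaussian binomial coefficient satisfies q^(b(a-b)) ≤ [a choose b]_q ≤ (1 + 2/q) · q^(b(a-b)). -/

import Mathlib

open Finset

/-- The Gaussian binomial coefficient for a real parameter `q` and naturals `a ≥ b`:
`[a choose b]_q = ∏_{i=0}^{b-1} (q^(a-i) - 1)/(q^(b-i) - 1)`. -/
noncomputable def gaussBinom (q : ℝ) (a b : ℕ) : ℝ :=
  ∏ i ∈ Finset.range b, (q ^ (a - i) - 1) / (q ^ (b - i) - 1)

lemma weier_aux (n : ℕ) (f : ℕ → ℝ) (h0 : ∀ i, 0 ≤ f i) (h1 : ∀ i, f i ≤ 1) :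
    1 - ∑ i ∈ range n, f i ≤ ∏ i ∈ range n, (1 - f i) := by
  induction n with
  | zero => simp
  | succ n ih =>
    rw [Finset.sum_range_succ, Finset.prod_range_succ]
    have hprod : 0 ≤ ∏ i ∈ range n, (1 - f i) :=
      Finset.prod_nonneg fun i _ => by linarith [h1 i]
    nlinarith [h0 n, h1 n, ih, Finset.sum_nonneg (fun i (_ : i ∈ range n) => h0 i)]

theorem gauss_binom_bounds_q_ge_four (q : ℝ) (a b : ℕ) (hq : 4 ≤ q) (hab : b ≤ a) :
    q ^ (b * (a - b)) ≤ gaussBinom q a b ∧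
      gaussBinom q a b ≤ (1 + 2 / q) * q ^ (b * (a - b)) := by
  have hq1 : (1 : ℝ) < q := by linarith
  have hq0 : (0 : ℝ) < q := by linarith
  have hden : ∀ i ∈ range b, 0 < q ^ (b - i) - 1 := by
    intro i hi
    have hib : i < b := Finset.mem_range.mp hi
    have : (1 : ℝ) < q ^ (b - i) := one_lt_pow₀ hq1 (by omega)
    linarith
  have hexp : ∀ i ∈ range b, (a - b) + (b - i) = a - i := by
    intro i hi
    have := Finset.mem_range.mp hi
    omega
  have hqab : (1 : ℝ) ≤ q ^ (a - b) := one_le_pow₀ hq1.le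
  have hlow : ∀ i ∈ range b, q ^ (a - b) ≤ (q ^ (a - i) - 1) / (q ^ (b - i) - 1) := by
    intro i hi
    rw [le_div_iff₀ (hden i hi)]
    have h1 : q ^ (a - b) * q ^ (b - i) = q ^ (a - i) := by
      rw [← pow_add, hexp i hi]
    nlinarith [hden i hi]
  have hconst : ∏ _i ∈ range b, q ^ (a - b) = q ^ (b * (a - b)) := by
    rw [Finset.prod_const, ← pow_mul, Finset.card_range, mul_comm]
  constructor
  · calc q ^ (b * (a - b)) = ∏ _i ∈ range b, q ^ (a - b) := hconst.symm
      _ ≤ gaussBinom q a b :=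
        Finset.prod_le_prod (fun i _ => pow_nonneg hq0.le _) hlow
  · -- upper bound
    have hpowpos : ∀ n : ℕ, (0:ℝ) < q ^ n := fun n => pow_pos hq0 n
    have hup : ∀ i ∈ range b,
        (q ^ (a - i) - 1) / (q ^ (b - i) - 1)
          ≤ q ^ (a - b) * (q ^ (b - i) / (q ^ (b - i) - 1)) := by
      intro i hi
      rw [mul_div_assoc', ← pow_add, hexp i hi]
      have hn : (1:ℝ) ≤ q ^ (a - i) := one_le_pow₀ hq1.le
      gcongr <;> linarith [hden i hi]
    set R : ℝ := ∏ i ∈ range b, q ^ (b - i) / (q ^ (b - i) - 1) with hRdef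
    have step1 : gaussBinom q a b ≤ q ^ (b * (a - b)) * R := by
      rw [hRdef, ← hconst, ← Finset.prod_mul_distrib]
      refine Finset.prod_le_prod (fun i hi => ?_) hup
      have := one_le_pow₀ (n := a - i) hq1.le
      exact div_nonneg (by linarith) (hden i hi).le
    set T : ℝ := ∏ i ∈ range b, (q ^ (b - i) - 1) / q ^ (b - i) with hTdef
    have hTform : T = ∏ i ∈ range b, (1 - (q ^ (b - i))⁻¹) := by
      refine Finset.prod_congr rfl fun i hi => ?_
      have := (hpowpos (b - i)).ne'
      field_simp
    have hf0 : ∀ i : ℕ, (0:ℝ) ≤ (q ^ (b - i))⁻¹ := fun i => (inv_nonneg).mpr (hpowpos _).le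
    have hf1 : ∀ i : ℕ, (q ^ (b - i))⁻¹ ≤ 1 := fun i =>
      inv_le_one_of_one_le₀ (one_le_pow₀ hq1.le)
    have hsum : ∑ i ∈ range b, (q ^ (b - i))⁻¹ ≤ 1 / (q - 1) := by
      have hre : ∑ i ∈ range b, (q ^ (b - i))⁻¹ = ∑ i ∈ range b, (q⁻¹) ^ (i + 1) := by
        rw [← Finset.sum_range_reflect]
        refine Finset.sum_congr rfl fun i hi => ?_
        have hib := Finset.mem_range.mp hi
        rw [← inv_pow]
        congr 1
        omega
      have hsum_eq : ∀ n : ℕ, ∑ i ∈ range n, (q⁻¹) ^ (i + 1) = (1 - (q⁻¹) ^ n) / (q - 1) := by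
        intro n
        induction n with
        | zero => simp
        | succ n ih =>
          rw [Finset.sum_range_succ, ih]
          have h1 : q - 1 ≠ 0 := by linarith
          have h0 : q ≠ 0 := hq0.ne'
          field_simp
          ring_nf
          rw [mul_inv_cancel₀ h0]
          ring
      rw [hre, hsum_eq]
      have h3 : (0:ℝ) ≤ (q⁻¹) ^ b := by positivity
      gcongr <;> linarith
    have hW : 1 - ∑ i ∈ range b, (q ^ (b - i))⁻¹ ≤ T := by
      rw [hTform]
      exact weier_aux b _ hf0 hf1
    have hTlb : q / (q + 2) ≤ T := by
      have e2 : q / (q + 2) ≤ 1 - 1 / (q - 1) := by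
        rw [div_le_iff₀ (by linarith)]
        have : 1 / (q - 1) * (q - 1) = 1 := one_div_mul_cancel (by linarith)
        nlinarith [this]
      linarith [hW, hsum]
    have hTpos : (0:ℝ) < T := lt_of_lt_of_le (by positivity) hTlb
    have hRT : R * T = 1 := by
      rw [hRdef, hTdef, ← Finset.prod_mul_distrib]
      rw [Finset.prod_congr rfl (fun i hi => ?_), Finset.prod_const_one]
      have h1 := (hden i hi).ne'
      have h2 := (hpowpos (b - i)).ne'
      field_simp
    have hR : R ≤ 1 + 2 / q := by
      have hReq : R = 1 / T := by
        rw [eq_div_iff hTpos.ne']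
        exact hRT
      have hT2 : q ≤ T * (q + 2) := (div_le_iff₀ (by linarith)).mp hTlb
      rw [hReq, div_le_iff₀ hTpos]
      have : (1 + 2 / q) * q = q + 2 := by field_simp
      nlinarith [hT2, hTpos]
    calc gaussBinom q a b ≤ q ^ (b * (a - b)) * R := step1
      _ ≤ q ^ (b * (a - b)) * (1 + 2 / q) :=
        mul_le_mul_of_nonneg_left hR (pow_nonneg hq0.le _)
      _ = (1 + 2 / q) * q ^ (b * (a - b)) := by ring
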